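/- Let 2 ≤ m ≤ n be integers, let ℋ be the m × n half-rectangular grid, i.e., the set of integer points (x, y) ∈ ℤ² with 0 ≤ x ≤ n − 1, 0 ≤ y ≤ m − 1, and (m−1)·x + (n−1)·y ≤ (m−1)·(n−1), and let P = (x₀, y₀) be a point of ℋ. Then there exists a set of exactly n − ⌈((n−m)/(m−1))·y₀⌉ − 1 lines in ℝ², none of which passes through P, whose union contains every point of ℋ ∖ {P}. -/
import Mathlib


open scoped Classical

/-- `IsLine s` means that `s ⊆ ℝ²` is a line, i.e. of the form
`{(x, y) | u * x + v * y = c}` with `(u, v) ≠ (0, 0)`. -/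
def IsLine (s : Set (ℝ × ℝ)) : Prop :=
  ∃ u v c : ℝ, (u, v) ≠ ((0 : ℝ), (0 : ℝ)) ∧ s = {p : ℝ × ℝ | u * p.1 + v * p.2 = c}

def hline (c : ℝ) : Set (ℝ × ℝ) := {p | p.2 = c}
def vline (c : ℝ) : Set (ℝ × ℝ) := {p | p.1 = c}
def dline (c : ℝ) : Set (ℝ × ℝ) := {p | p.1 + p.2 = c}

lemma isLine_hline (c : ℝ) : IsLine (hline c) := by
  refine ⟨0, 1, c, by simp, ?_⟩
  ext p; simp [hline]

lemma isLine_vline (c : ℝ) : IsLine (vline c) := by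
  refine ⟨1, 0, c, by simp, ?_⟩
  ext p; simp [vline]

lemma isLine_dline (c : ℝ) : IsLine (dline c) := by
  refine ⟨1, 1, c, by simp, ?_⟩
  ext p; simp [dline]

lemma hline_ne_vline (c d : ℝ) : hline c ≠ vline d := by
  intro h
  have h1 : (d + 1, c) ∈ hline c := by simp [hline]
  rw [h] at h1
  simp [vline] at h1

lemma hline_ne_dline (c d : ℝ) : hline c ≠ dline d := by
  intro h
  have h1 : (d - c + 1, c) ∈ hline c := by simp [hline]
  rw [h] at h1
  simp [dline] at h1
  linarith

lemma vline_ne_dline (c d : ℝ) : vline c ≠ dline d := by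
  intro h
  have h1 : (c, d - c + 1) ∈ vline c := by simp [vline]
  rw [h] at h1
  simp [dline] at h1
  linarith

lemma hline_inj {c d : ℝ} (h : hline c = hline d) : c = d := by
  have h1 : (0, c) ∈ hline c := by simp [hline]
  rw [h] at h1; simpa [hline] using h1

lemma vline_inj {c d : ℝ} (h : vline c = vline d) : c = d := by
  have h1 : (c, 0) ∈ vline c := by simp [vline]
  rw [h] at h1; simpa [vline] using h1

lemma dline_inj {c d : ℝ} (h : dline c = dline d) : c = d := by
  have h1 : (0, c) ∈ dline c := by simp [dline]
  rw [h] at h1; simp [dline] at h1; linarith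

theorem stmt_7 (m n : ℕ) (hm : 2 ≤ m) (hmn : m ≤ n)
    -- P = (x₀, y₀) is a point of the m × n half-rectangular grid
    (x₀ y₀ : ℕ) (hx₀ : x₀ ≤ n - 1) (hy₀ : y₀ ≤ m - 1)
    (hP : (m - 1) * x₀ + (n - 1) * y₀ ≤ (m - 1) * (n - 1)) :
    -- there is a set of exactly n − ⌈((n−m)/(m−1))·y₀⌉ − 1 lines, none through P,
    -- whose union contains every point of ℋ ∖ {P}
    ∃ L : Finset (Set (ℝ × ℝ)),
      (∀ s ∈ L, IsLine s) ∧
      (∀ s ∈ L, ((x₀ : ℝ), (y₀ : ℝ)) ∉ s) ∧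
      (∀ x y : ℕ, x ≤ n - 1 → y ≤ m - 1 →
        (m - 1) * x + (n - 1) * y ≤ (m - 1) * (n - 1) → (x, y) ≠ (x₀, y₀) →
        ∃ s ∈ L, ((x : ℝ), (y : ℝ)) ∈ s) ∧
      (L.card : ℤ) = (n : ℤ) - ⌈(((n : ℝ) - (m : ℝ)) / ((m : ℝ) - 1)) * (y₀ : ℝ)⌉ - 1 := by
  have hm1 : 1 ≤ m := by omega
  have hn1 : 1 ≤ n := by omega
  have hm1' : 0 < m - 1 := by omega
  have hsub : (n - 1) * y₀ ≤ (m - 1) * (n - 1) := le_trans (Nat.le_add_left _ _) hP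
  have hPz : ((m : ℤ) - 1) * x₀ + ((n : ℤ) - 1) * y₀ ≤ ((m : ℤ) - 1) * ((n : ℤ) - 1) := by
    zify [hm1, hn1] at hP; exact hP
  set X : ℕ := ((m - 1) * (n - 1) - (n - 1) * y₀) / (m - 1) with hXdef
  -- x₀ ≤ X
  have hx₀X : x₀ ≤ X := by
    rw [hXdef, Nat.le_div_iff_mul_le hm1']
    zify [hm1, hn1, hsub]
    linarith
  -- coverage bound
  have hcov : ∀ x y : ℕ, (m - 1) * x + (n - 1) * y ≤ (m - 1) * (n - 1) → y₀ ≤ y →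
      x + y - y₀ ≤ X := by
    intro x y hxy hyy
    rw [hXdef, Nat.le_div_iff_mul_le hm1']
    have hyy' : y₀ ≤ x + y := by omega
    zify [hm1, hn1, hsub, hyy'] at *
    have hmono : ((m : ℤ) - 1) * ((y : ℤ) - y₀) ≤ ((n : ℤ) - 1) * ((y : ℤ) - y₀) := by
      apply mul_le_mul_of_nonneg_right <;> [skip; omega]
      have : (m : ℤ) ≤ n := by exact_mod_cast hmn
      omega
    linarith
  -- the lines
  set g : ℕ → Set (ℝ × ℝ) := fun i =>
    if i < y₀ then hline i
    else if i < y₀ + x₀ then vline ((i - y₀ : ℕ) : ℝ)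
    else dline ((i + 1 : ℕ) : ℝ) with hg
  have hinj : Set.InjOn g ↑(Finset.range (y₀ + X)) := by
    intro i hi j hj hij
    simp only [hg] at hij
    split_ifs at hij
    · have h' := hline_inj hij
      exact_mod_cast h'
    · exact absurd hij (hline_ne_vline _ _)
    · exact absurd hij (hline_ne_dline _ _)
    · exact absurd hij.symm (hline_ne_vline _ _)
    · have h' := vline_inj hij
      have h'' : i - y₀ = j - y₀ := by exact_mod_cast h'
      omega
    · exact absurd hij (vline_ne_dline _ _)
    · exact absurd hij.symm (hline_ne_dline _ _)
    · exact absurd hij.symm (vline_ne_dline _ _)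
    · have h' := dline_inj hij
      have h'' : i + 1 = j + 1 := by exact_mod_cast h'
      omega
  refine ⟨(Finset.range (y₀ + X)).image g, ?_, ?_, ?_, ?_⟩
  · -- IsLine
    intro s hs
    obtain ⟨i, _, rfl⟩ := Finset.mem_image.mp hs
    simp only [hg]
    split_ifs
    · exact isLine_hline _
    · exact isLine_vline _
    · exact isLine_dline _
  · -- P not on any line
    intro s hs
    obtain ⟨i, hi, rfl⟩ := Finset.mem_image.mp hs
    simp only [hg]
    split_ifs with h1 h2
    · simp only [hline, Set.mem_setOf_eq]
      intro hc
      have : y₀ = i := by exact_mod_cast hc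
      omega
    · simp only [vline, Set.mem_setOf_eq]
      intro hc
      have : x₀ = i - y₀ := by exact_mod_cast hc
      omega
    · simp only [dline, Set.mem_setOf_eq]
      intro hc
      have : x₀ + y₀ = i + 1 := by exact_mod_cast hc
      omega
  · -- coverage
    intro x y _ _ hxy hne
    have hne' : ¬(x = x₀ ∧ y = y₀) := by
      intro ⟨h1, h2⟩; exact hne (by rw [h1, h2])
    by_cases h1 : y < y₀
    · refine ⟨g y, Finset.mem_image.mpr ⟨y, Finset.mem_range.mpr (by omega), rfl⟩, ?_⟩
      simp only [hg, if_pos h1]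
      simp [hline]
    · by_cases h2 : x < x₀
      · refine ⟨g (y₀ + x),
          Finset.mem_image.mpr ⟨y₀ + x, Finset.mem_range.mpr (by omega), rfl⟩, ?_⟩
        simp only [hg]
        rw [if_neg (by omega), if_pos (by omega)]
        simp only [vline, Set.mem_setOf_eq]
        norm_cast
        omega
      · set v := x + y - y₀ with hv
        have hv1 : x₀ + 1 ≤ v := by omega
        have hv2 : v ≤ X := hcov x y hxy (by omega)
        refine ⟨g (y₀ + v - 1),
          Finset.mem_image.mpr ⟨y₀ + v - 1, Finset.mem_range.mpr (by omega), rfl⟩, ?_⟩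
        simp only [hg]
        rw [if_neg (by omega), if_neg (by omega)]
        simp only [dline, Set.mem_setOf_eq]
        have : y₀ + v - 1 + 1 = x + y := by omega
        rw [this]
        push_cast
        ring
  · -- cardinality
    rw [Finset.card_image_of_injOn hinj, Finset.card_range]
    set N : ℤ := ((n : ℤ) - (m : ℤ)) * (y₀ : ℤ) with hN
    have hAne : ((m : ℤ) - 1) ≠ 0 := by
      have : (2 : ℤ) ≤ m := by exact_mod_cast hm
      omega
    have hceil : ⌈(((n : ℝ) - (m : ℝ)) / ((m : ℝ) - 1)) * (y₀ : ℝ)⌉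
        = -((-N) / ((m : ℤ) - 1)) := by
      have hq : (((n : ℝ) - (m : ℝ)) / ((m : ℝ) - 1)) * (y₀ : ℝ)
          = -(((-N : ℤ) : ℝ) / ((m - 1 : ℕ) : ℝ)) := by
        simp only [hN]
        push_cast [Nat.cast_sub hm1]
        have hne : (m : ℝ) - 1 ≠ 0 := by
          have h2 : (2 : ℝ) ≤ (m : ℝ) := by exact_mod_cast hm
          linarith
        field_simp
      have e3 : ⌊((-N : ℤ) : ℝ) / ((m - 1 : ℕ) : ℝ)⌋ = (-N) / ((m - 1 : ℕ) : ℤ) := by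
        rw [show ((-N : ℤ) : ℝ) / ((m - 1 : ℕ) : ℝ)
            = (((((-N : ℤ) : ℚ) / ((m - 1 : ℕ) : ℚ)) : ℚ) : ℝ) from by norm_cast]
        rw [Rat.floor_cast, Rat.floor_intCast_div_natCast]
      have hd : ((m - 1 : ℕ) : ℤ) = (m : ℤ) - 1 := by
        push_cast [Nat.cast_sub hm1]; ring
      rw [hq, Int.ceil_neg, e3, hd]
    rw [hceil]
    have hXZ : (X : ℤ) = (((m : ℤ) - 1) * ((n : ℤ) - 1) - ((n : ℤ) - 1) * y₀) / ((m : ℤ) - 1) := by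
      rw [hXdef]
      push_cast [Nat.cast_sub hm1, Nat.cast_sub hn1, Nat.cast_sub hsub, Int.natCast_div]
      rfl
    have e4 : ((m : ℤ) - 1) * ((n : ℤ) - 1) - ((n : ℤ) - 1) * (y₀ : ℤ)
        = -N + ((m : ℤ) - 1) * (((n : ℤ) - 1) - y₀) := by
      rw [hN]; ring
    rw [e4, Int.add_mul_ediv_left _ _ hAne] at hXZ
    push_cast
    linarith [hXZ]
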